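/- Equality of the two coprime factorizations of the Youla-parameterized controller (part of Theorem 1(b)): Let M, N, M̃, Ñ, X, Y, X̃, Ỹ be matrices over RatFunc ℝ of sizes M (m×m), N (p×m), M̃ (p×p), Ñ (p×m), X (m×p), Y (m×m), X̃ (m×p), Ỹ (p×p) satisfying [[Y, X],[−Ñ, M̃]] · [[M, −X̃],[N, Ỹ]] = I_{m+p}, let Q be an m×p matrix over RatFunc ℝ, and define X_Q := X + Q·M̃, Y_Q := Y − Q·Ñ, X̃_Q := X̃ + M·Q, Ỹ_Q := Ỹ − N·Q. If Y_Q and Ỹ_Q are invertible, then Y_Q⁻¹ · X_Q = X̃_Q · Ỹ_Q⁻¹. -/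

import Mathlib

open Matrix

noncomputable section

/-- **Equality of the two coprime factorizations of the Youla-parameterized
controller (part of Theorem 1(b)).** -/
theorem youla_left_right_factorizations_agree {m p : ℕ}
    (M : Matrix (Fin m) (Fin m) (RatFunc ℝ)) (N : Matrix (Fin p) (Fin m) (RatFunc ℝ))
    (Mt : Matrix (Fin p) (Fin p) (RatFunc ℝ)) (Nt : Matrix (Fin p) (Fin m) (RatFunc ℝ))
    (X : Matrix (Fin m) (Fin p) (RatFunc ℝ)) (Y : Matrix (Fin m) (Fin m) (RatFunc ℝ))
    (Xt : Matrix (Fin m) (Fin p) (RatFunc ℝ)) (Yt : Matrix (Fin p) (Fin p) (RatFunc ℝ))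
    (hBez : Matrix.fromBlocks Y X (-Nt) Mt * Matrix.fromBlocks M (-Xt) N Yt = 1)
    (Q : Matrix (Fin m) (Fin p) (RatFunc ℝ))
    (XQ : Matrix (Fin m) (Fin p) (RatFunc ℝ)) (hXQ : XQ = X + Q * Mt)
    (YQ : Matrix (Fin m) (Fin m) (RatFunc ℝ)) (hYQ : YQ = Y - Q * Nt)
    (XtQ : Matrix (Fin m) (Fin p) (RatFunc ℝ)) (hXtQ : XtQ = Xt + M * Q)
    (YtQ : Matrix (Fin p) (Fin p) (RatFunc ℝ)) (hYtQ : YtQ = Yt - N * Q)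
    (hYQinv : IsUnit YQ) (hYtQinv : IsUnit YtQ) :
    YQ⁻¹ * XQ = XtQ * YtQ⁻¹ := by
  have h := hBez
  rw [← Matrix.fromBlocks_one, Matrix.fromBlocks_multiply] at h
  have h11 : Y * M + X * N = 1 := by
    have := congrArg Matrix.toBlocks₁₁ h
    simpa [Matrix.toBlocks_fromBlocks₁₁, -Matrix.fromBlocks_one] using this
  have h12 : Y * -Xt + X * Yt = 0 := by
    have := congrArg Matrix.toBlocks₁₂ h
    simpa [Matrix.toBlocks_fromBlocks₁₂, -Matrix.fromBlocks_one] using this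
  have h21 : -Nt * M + Mt * N = 0 := by
    have := congrArg Matrix.toBlocks₂₁ h
    simpa [Matrix.toBlocks_fromBlocks₂₁, -Matrix.fromBlocks_one] using this
  have h22 : -Nt * -Xt + Mt * Yt = 1 := by
    have := congrArg Matrix.toBlocks₂₂ h
    simpa [Matrix.toBlocks_fromBlocks₂₂, -Matrix.fromBlocks_one] using this
  have e1 : Y * Xt = X * Yt := by
    rw [Matrix.mul_neg, ← sub_eq_neg_add] at h12
    exact (sub_eq_zero.mp h12).symm
  have e2 : Nt * Xt = 1 - Mt * Yt := by
    rw [Matrix.neg_mul, Matrix.mul_neg, neg_neg] at h22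
    rw [eq_sub_iff_add_eq]; exact h22
  have e3 : Nt * M = Mt * N := by
    rw [Matrix.neg_mul, ← sub_eq_neg_add] at h21
    exact (sub_eq_zero.mp h21).symm
  have e4 : Y * M = 1 - X * N := by
    rw [eq_sub_iff_add_eq]; exact h11
  have f1 : Y * (M * Q) = Q - X * (N * Q) := by
    rw [← Matrix.mul_assoc, e4, Matrix.sub_mul, Matrix.one_mul, Matrix.mul_assoc]
  have f2 : Q * (Nt * Xt) = Q - Q * (Mt * Yt) := by
    rw [e2, Matrix.mul_sub, Matrix.mul_one]
  have f3 : Q * (Nt * (M * Q)) = Q * (Mt * (N * Q)) := by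
    rw [← Matrix.mul_assoc Nt, ← Matrix.mul_assoc Mt, e3]
  have key : YQ * XtQ = XQ * YtQ := by
    subst hXQ hYQ hXtQ hYtQ
    simp only [Matrix.sub_mul, Matrix.mul_add, Matrix.add_mul, Matrix.mul_sub,
      Matrix.mul_assoc]
    rw [e1, f1, f2, f3]
    abel
  have hY : YQ⁻¹ * YQ = 1 := Matrix.nonsing_inv_mul _ ((Matrix.isUnit_iff_isUnit_det _).mp hYQinv)
  have hYt : YtQ * YtQ⁻¹ = 1 := Matrix.mul_nonsing_inv _ ((Matrix.isUnit_iff_isUnit_det _).mp hYtQinv)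
  calc YQ⁻¹ * XQ = YQ⁻¹ * (XQ * YtQ) * YtQ⁻¹ := by
        rw [Matrix.mul_assoc (YQ⁻¹), Matrix.mul_assoc XQ, hYt, Matrix.mul_one]
    _ = YQ⁻¹ * (YQ * XtQ) * YtQ⁻¹ := by rw [key]
    _ = XtQ * YtQ⁻¹ := by rw [← Matrix.mul_assoc (YQ⁻¹), hY, Matrix.one_mul]
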